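/- Let n ≥ 1 and let C denote the cycle graph on ZMod (2n+1), i.e. a adjacent to a' iff a ≠ a' and a' = a+1 or a' = a−1. Let A be a unital C*-algebra and let p : ZMod (2n+1) → ZMod (2n+1) → A be a family of projections such that ∑_b p a b = 1 for every a, and p a b · p a' b' = 0 whenever a, a' are adjacent in C and b, b' are not adjacent in C. Then: (i) p a b · p a' b = 0 for all distinct a, a' and every b; (ii) ∑_a p a b = 1 for every b; (iii) p a b · p a' b' = 0 whenever a, a' are not adjacent in C and b, b' are adjacent in C. -/
import Mathlib


/-- Adjacency in the cycle graph on `ZMod m`: `a ~ a'` iff `a ≠ a'` and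
`a' = a + 1` or `a' = a - 1`. -/
def cycleAdj (m : ℕ) (a a' : ZMod m) : Prop :=
  a ≠ a' ∧ (a' = a + 1 ∨ a' = a - 1)

section Aux

variable {A : Type*} [CStarAlgebra A]

/-- Projections summing to `1` are mutually orthogonal. -/
lemma orth_of_sum_one {ι : Type*} [Fintype ι] [DecidableEq ι] (q : ι → A)
    (hq : ∀ i, star (q i) = q i ∧ q i * q i = q i)
    (hs : ∑ i, q i = 1) : ∀ i j, i ≠ j → q i * q j = 0 := by
  letI := CStarAlgebra.spectralOrder A
  letI := CStarAlgebra.spectralOrderedRing A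
  have hterm : ∀ i k, q i * (q k * q i) = star (q k * q i) * (q k * q i) := by
    intro i k
    rw [star_mul, (hq k).1, (hq i).1, mul_assoc, ← mul_assoc (q k), (hq k).2]
  have key : ∀ i j, j ≠ i → q j * q i = 0 := by
    intro i j hji
    have h1 : ∑ k, q i * (q k * q i) = q i := by
      have : ∑ k, q i * (q k * q i) = q i * ((∑ k, q k) * q i) := by
        rw [Finset.sum_mul, Finset.mul_sum]
      rw [this, hs, one_mul, (hq i).2]
    have h3 : q i * (q i * q i) + ∑ k ∈ Finset.univ.erase i, q i * (q k * q i)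
        = ∑ k, q i * (q k * q i) :=
      Finset.add_sum_erase Finset.univ (fun k => q i * (q k * q i)) (Finset.mem_univ i)
    have h4 : q i * (q i * q i) = q i := by rw [(hq i).2, (hq i).2]
    have h2 : ∑ k ∈ Finset.univ.erase i, q i * (q k * q i) = 0 := by
      have h5 := h3.trans h1
      rw [h4] at h5
      exact add_left_cancel (h5.trans (add_zero (q i)).symm)
    have h5 := (Finset.sum_eq_zero_iff_of_nonneg (fun k _ => by
      rw [hterm i k]; exact star_mul_self_nonneg _)).1 h2 j
      (Finset.mem_erase.2 ⟨hji, Finset.mem_univ j⟩)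
    rw [hterm i j] at h5
    exact (CStarRing.star_mul_self_eq_zero_iff _).1 h5
  intro i j hij
  exact key j i hij

end Aux

/-- `y` is reachable from `x` by a walk of length `k` in the cycle on `ZMod (2n+1)`. -/
def Rk (n k : ℕ) (x y : ZMod (2 * n + 1)) : Prop :=
  ∃ i : ℤ, i.natAbs ≤ k ∧ i % 2 = (k : ℤ) % 2 ∧ y = x + (i : ZMod (2 * n + 1))

lemma zmod_val_cast (n : ℕ) (x : ZMod (2 * n + 1)) :
    ((x.val : ℕ) : ZMod (2 * n + 1)) = x := by
  haveI : NeZero (2 * n + 1) := ⟨by omega⟩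
  rw [ZMod.natCast_val, ZMod.cast_id]

lemma Rk_intro (n k : ℕ) {b b' : ZMod (2 * n + 1)} (i : ℤ) (hi : i.natAbs ≤ k)
    (hp : i % 2 = (k : ℤ) % 2)
    (hv : i = ((b' - b).val : ℤ) ∨ i = ((b' - b).val : ℤ) - (2 * n + 1)) :
    Rk n k b b' := by
  refine ⟨i, hi, hp, ?_⟩
  have hval := zmod_val_cast n (b' - b)
  have h0 : ((2 * n + 1 : ℕ) : ZMod (2 * n + 1)) = 0 := ZMod.natCast_self _
  rcases hv with rfl | rfl
  · rw [Int.cast_natCast, hval]; ring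
  · push_cast [hval]
    push_cast at h0
    rw [h0]; ring

lemma Rk_elim (n k : ℕ) (hk : k ≤ 2 * n) {b b' : ZMod (2 * n + 1)} (h : Rk n k b b') :
    ∃ i : ℤ, i.natAbs ≤ k ∧ i % 2 = (k : ℤ) % 2 ∧
      (i = ((b' - b).val : ℤ) ∨ i = ((b' - b).val : ℤ) - (2 * n + 1)) := by
  obtain ⟨i, hi, hp, heq⟩ := h
  refine ⟨i, hi, hp, ?_⟩
  have hval := zmod_val_cast n (b' - b)
  have hrlt : (b' - b).val < 2 * n + 1 := ZMod.val_lt _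
  have hcast : ((i - ((b' - b).val : ℤ) : ℤ) : ZMod (2 * n + 1)) = 0 := by
    push_cast
    rw [heq] at hval ⊢
    linear_combination -hval
  rw [ZMod.intCast_zmod_eq_zero_iff_dvd] at hcast
  obtain ⟨c, hc⟩ := hcast
  push_cast at hc
  have hiub : i ≤ 2 * n := by omega
  have hilb : -(2 * (n : ℤ)) ≤ i := by omega
  have hcu : c ≤ 0 := by
    by_contra hcon
    push_neg at hcon
    have h1 : 2 * (n : ℤ) + 1 ≤ (2 * (n : ℤ) + 1) * c :=
      le_mul_of_one_le_right (by positivity) hcon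
    have h2 : (0 : ℤ) ≤ ((b' - b).val : ℤ) := by positivity
    linarith
  have hcl : -1 ≤ c := by
    by_contra hcon
    push_neg at hcon
    have h1 : (2 * (n : ℤ) + 1) * c ≤ (2 * (n : ℤ) + 1) * (-2) :=
      mul_le_mul_of_nonneg_left (by omega) (by positivity)
    have h2 : ((b' - b).val : ℤ) ≤ 2 * n := by omega
    linarith
  interval_cases c
  · right; linarith
  · left; linarith

theorem walk_lemma {A : Type*} [CStarAlgebra A] (n : ℕ) (hn : 1 ≤ n)
    (p : ZMod (2 * n + 1) → ZMod (2 * n + 1) → A)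
    (hproj : ∀ a b, star (p a b) = p a b ∧ p a b * p a b = p a b)
    (hsum : ∀ a, ∑ b : ZMod (2 * n + 1), p a b = 1)
    (hrel : ∀ a a' b b', cycleAdj (2 * n + 1) a a' → ¬ cycleAdj (2 * n + 1) b b' →
      p a b * p a' b' = 0) :
    ∀ k (a a' b b' : ZMod (2 * n + 1)), Rk n k a a' → ¬ Rk n k b b' →
      p a b * p a' b' = 0 := by
  haveI : Fact (1 < 2 * n + 1) := ⟨by omega⟩
  have hone : (1 : ZMod (2 * n + 1)) ≠ 0 := one_ne_zero
  intro k
  induction k with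
  | zero =>
    rintro a a' b b' ⟨i, hi, -, rfl⟩ hnb
    have hi0 : i = 0 := by omega
    subst hi0
    have hbb : b ≠ b' := fun h => hnb ⟨0, le_rfl, rfl, by simp [h]⟩
    simpa using orth_of_sum_one (p a) (hproj a) (hsum a) b b' hbb
  | succ k ih =>
    rintro a a' b b' ⟨i, hi, hpar, rfl⟩ hnb
    set i₁ : ℤ := if i ≤ 0 then i + 1 else i - 1 with hi₁def
    have hi₁a : i₁.natAbs ≤ k := by rw [hi₁def]; split <;> omega
    have hi₁p : i₁ % 2 = (k : ℤ) % 2 := by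
      push_cast at hpar
      rw [hi₁def]; split <;> omega
    have hdiff : i - i₁ = 1 ∨ i - i₁ = -1 := by rw [hi₁def]; split <;> omega
    set a₁ : ZMod (2 * n + 1) := a + (i₁ : ZMod (2 * n + 1)) with ha₁
    have hsplit : a + (i : ZMod (2 * n + 1)) = a₁ + ((i - i₁ : ℤ) : ZMod (2 * n + 1)) := by
      rw [ha₁]; push_cast; ring
    have key : ∀ b₁, p a b * (p a₁ b₁ * p (a + (i : ZMod (2 * n + 1))) b') = 0 := by
      intro b₁
      by_cases hR : Rk n k b b₁
      · obtain ⟨i', hi', hpar', rfl⟩ := hR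
        have hadj : cycleAdj (2 * n + 1) a₁ (a + (i : ZMod (2 * n + 1))) := by
          rw [hsplit]
          rcases hdiff with h | h <;> rw [h]
          · exact ⟨fun hh => hone (by push_cast at hh ⊢; linear_combination -hh),
              Or.inl (by push_cast; ring)⟩
          · exact ⟨fun hh => hone (by push_cast at hh ⊢; linear_combination hh),
              Or.inr (by push_cast; ring)⟩
        have hnadj : ¬ cycleAdj (2 * n + 1) (b + (i' : ZMod (2 * n + 1))) b' := by
          rintro ⟨-, h | h⟩
          · refine hnb ⟨i' + 1, by omega, by push_cast at hpar ⊢; omega,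
              by rw [h]; push_cast; ring⟩
          · refine hnb ⟨i' - 1, by omega, by push_cast at hpar ⊢; omega,
              by rw [h]; push_cast; ring⟩
        rw [hrel _ _ _ _ hadj hnadj, mul_zero]
      · have h0 := ih a a₁ b b₁ ⟨i₁, hi₁a, hi₁p, ha₁⟩ hR
        rw [← mul_assoc, h0, zero_mul]
    calc p a b * p (a + (i : ZMod (2 * n + 1))) b'
        = p a b * (1 * p (a + (i : ZMod (2 * n + 1))) b') := by rw [one_mul]
      _ = ∑ b₁, p a b * (p a₁ b₁ * p (a + (i : ZMod (2 * n + 1))) b') := by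
          rw [← hsum a₁, Finset.sum_mul, Finset.mul_sum]
      _ = 0 := Finset.sum_eq_zero fun b₁ _ => key b₁

/-- Let `n ≥ 1` and let `p : ZMod (2n+1) → ZMod (2n+1) → A` be a
family of projections in a unital C*-algebra satisfying the relations of the
quantum endomorphism monoid `End⁺(C_{2n+1})` of the odd cycle.  Then the
additional relations of the quantum automorphism group `Aut⁺(C_{2n+1})` hold:
(i) distinct rows are columnwise orthogonal, (ii) columns sum to `1`,
(iii) `p a b * p a' b' = 0` whenever `a ≁ a'` but `b ~ b'`. -/
theorem stmt6 {A : Type*} [CStarAlgebra A] (n : ℕ) (hn : 1 ≤ n)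
    (p : ZMod (2 * n + 1) → ZMod (2 * n + 1) → A)
    (hproj : ∀ a b, star (p a b) = p a b ∧ p a b * p a b = p a b)
    (hsum : ∀ a, ∑ b : ZMod (2 * n + 1), p a b = 1)
    (hrel : ∀ a a' b b', cycleAdj (2 * n + 1) a a' → ¬ cycleAdj (2 * n + 1) b b' →
      p a b * p a' b' = 0) :
    (∀ a a' b, a ≠ a' → p a b * p a' b = 0) ∧
    (∀ b, ∑ a : ZMod (2 * n + 1), p a b = 1) ∧
    (∀ a a' b b', ¬ cycleAdj (2 * n + 1) a a' → cycleAdj (2 * n + 1) b b' →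
      p a b * p a' b' = 0) := by
  haveI : NeZero (2 * n + 1) := ⟨by omega⟩
  haveI : Fact (1 < 2 * n + 1) := ⟨by omega⟩
  have hw := walk_lemma n hn p hproj hsum hrel
  have hrow : ∀ a b b', b ≠ b' → p a b * p a b' = 0 := fun a b b' h =>
    orth_of_sum_one (p a) (hproj a) (hsum a) b b' h
  have hvalne : ∀ (x y : ZMod (2 * n + 1)), x ≠ y → 1 ≤ (y - x).val := by
    intro x y h
    rcases Nat.eq_zero_or_pos (y - x).val with h0 | h1
    · exact absurd ((ZMod.val_eq_zero _).1 h0) (sub_ne_zero.mpr (Ne.symm h))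
    · exact h1
  -- Part (i)
  have part1 : ∀ a a' b, a ≠ a' → p a b * p a' b = 0 := by
    intro a a' b hne
    set d : ℕ := (a' - a).val with hd
    have hd1 : 1 ≤ d := hvalne a a' hne
    have hd2 : d < 2 * n + 1 := ZMod.val_lt _
    set k : ℕ := if d % 2 = 1 then d else 2 * n + 1 - d with hk
    have hk2 : k ≤ 2 * n := by rw [hk]; split <;> omega
    have hkodd : k % 2 = 1 := by rw [hk]; split <;> omega
    apply hw k a a' b b
    · by_cases hpar : d % 2 = 1
      · have hkd : k = d := by rw [hk, if_pos hpar]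
        exact Rk_intro n k (d : ℤ) (by omega) (by rw [hkd]) (Or.inl (by rw [hd]))
      · have hkd : k = 2 * n + 1 - d := by rw [hk, if_neg hpar]
        exact Rk_intro n k ((d : ℤ) - (2 * n + 1)) (by omega) (by omega)
          (Or.inr (by rw [hd]))
    · intro hRb
      obtain ⟨i, hi, hp2, hv⟩ := Rk_elim n k hk2 hRb
      have hbb : ((b - b).val : ℤ) = 0 := by rw [sub_self, ZMod.val_zero]; rfl
      omega
  -- Part (ii)
  have part2 : ∀ b, ∑ a, p a b = 1 := by
    letI := CStarAlgebra.spectralOrder A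
    letI := CStarAlgebra.spectralOrderedRing A
    have hq : ∀ b, star (∑ a, p a b) = (∑ a, p a b) ∧
        (∑ a, p a b) * (∑ a, p a b) = ∑ a, p a b := by
      intro b
      constructor
      · rw [star_sum]; exact Finset.sum_congr rfl fun a _ => (hproj a b).1
      · rw [Finset.sum_mul_sum]
        refine (Finset.sum_congr rfl fun a _ => ?_)
        refine Finset.sum_eq_single_of_mem a (Finset.mem_univ a) (fun a' _ h => ?_) |>.trans
          (hproj a b).2
        exact part1 a a' b (Ne.symm h)
    have hpos : ∀ b, (0 : A) ≤ 1 - ∑ a, p a b := by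
      intro b
      have hst : star (1 - ∑ a, p a b) = 1 - ∑ a, p a b := by
        rw [star_sub, star_one, (hq b).1]
      have h1 : star (1 - ∑ a, p a b) * (1 - ∑ a, p a b) = 1 - ∑ a, p a b := by
        rw [hst, sub_mul, one_mul, mul_sub, mul_one, (hq b).2]
        abel
      rw [← h1]
      exact star_mul_self_nonneg _
    have hsumz : ∑ b, (1 - ∑ a, p a b) = 0 := by
      rw [Finset.sum_sub_distrib]
      have hcomm : ∑ b : ZMod (2 * n + 1), ∑ a, p a b
          = ∑ a : ZMod (2 * n + 1), ∑ b, p a b := Finset.sum_comm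
      rw [hcomm]
      simp [hsum]
    intro b
    have h := (Finset.sum_eq_zero_iff_of_nonneg (fun b _ => hpos b)).1 hsumz b
      (Finset.mem_univ b)
    rw [sub_eq_zero] at h
    exact h.symm
  -- Part (iii)
  have part3 : ∀ a a' b b', ¬ cycleAdj (2 * n + 1) a a' → cycleAdj (2 * n + 1) b b' →
      p a b * p a' b' = 0 := by
    intro a a' b b' hna hadj
    by_cases haa : a = a'
    · subst haa
      exact hrow a b b' hadj.1
    · set d : ℕ := (a' - a).val with hd
      have hval : ((d : ℕ) : ZMod (2 * n + 1)) = a' - a := zmod_val_cast n (a' - a)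
      have hd1 : 1 ≤ d := hvalne a a' haa
      have hd2 : d < 2 * n + 1 := ZMod.val_lt _
      have hdne1 : d ≠ 1 := by
        intro h1
        refine hna ⟨haa, Or.inl ?_⟩
        rw [h1] at hval
        push_cast at hval
        linear_combination -hval
      have hdne2 : d ≠ 2 * n := by
        intro h1
        refine hna ⟨haa, Or.inr ?_⟩
        rw [h1] at hval
        have h0 : ((2 * n + 1 : ℕ) : ZMod (2 * n + 1)) = 0 := ZMod.natCast_self _
        push_cast at hval h0
        linear_combination h0 - hval
      set k : ℕ := if d % 2 = 0 then d else 2 * n + 1 - d with hk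
      have hk2 : k ≤ 2 * n := by rw [hk]; split <;> omega
      have hkeven : k % 2 = 0 ∧ k ≤ 2 * n - 1 := by rw [hk]; split <;> omega
      apply hw k a a' b b'
      · by_cases hpar : d % 2 = 0
        · have hkd : k = d := by rw [hk, if_pos hpar]
          exact Rk_intro n k (d : ℤ) (by omega) (by rw [hkd]) (Or.inl (by rw [hd]))
        · have hkd : k = 2 * n + 1 - d := by rw [hk, if_neg hpar]
          exact Rk_intro n k ((d : ℤ) - (2 * n + 1)) (by omega) (by omega)
            (Or.inr (by rw [hd]))
      · intro hRb
        obtain ⟨i, hi, hp2, hv⟩ := Rk_elim n k hk2 hRb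
        have hr : (b' - b).val = 1 ∨ (b' - b).val = 2 * n := by
          rcases hadj.2 with h | h
          · left
            have hb : b' - b = 1 := by rw [h]; ring
            rw [hb, ZMod.val_one]
          · right
            have hb : b' - b = -1 := by rw [h]; ring
            rw [hb]
            have := ZMod.val_neg_one (2 * n)
            exact this
        omega
  exact ⟨part1, part2, part3⟩
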